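/- For a strictly copositive symmetric n×n real matrix B, the set Min_COP(B) = { v ∈ ℤ₊ⁿ \ {0} : B[v] = min_COP(B) } of vectors attaining the copositive minimum is finite. -/
import Mathlib


open Matrix

/-- The quadratic form `x ↦ xᵀ B x`. -/
def qf {n : ℕ} (B : Matrix (Fin n) (Fin n) ℝ) (x : Fin n → ℝ) : ℝ := x ⬝ᵥ B.mulVec x

/-- Coercion of an integer vector to a real vector. -/
def intCast {n : ℕ} (v : Fin n → ℤ) : Fin n → ℝ := fun i => (v i : ℝ)

/-- `B` is strictly copositive: `xᵀBx > 0` for all nonzero nonnegative `x`. -/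
def StrictlyCopositive {n : ℕ} (B : Matrix (Fin n) (Fin n) ℝ) : Prop :=
  ∀ x : Fin n → ℝ, (∀ i, 0 ≤ x i) → x ≠ 0 → 0 < qf B x

/-- The copositive minimum: infimum of `vᵀBv` over nonzero nonnegative integer vectors. -/
noncomputable def copoMin {n : ℕ} (B : Matrix (Fin n) (Fin n) ℝ) : ℝ :=
  sInf {r : ℝ | ∃ v : Fin n → ℤ, (∀ i, 0 ≤ v i) ∧ v ≠ 0 ∧ r = qf B (intCast v)}

/-- The set of nonzero nonnegative integer vectors attaining the copositive minimum. -/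
def MinCOP {n : ℕ} (B : Matrix (Fin n) (Fin n) ℝ) : Set (Fin n → ℤ) :=
  {v | (∀ i, 0 ≤ v i) ∧ v ≠ 0 ∧ qf B (intCast v) = copoMin B}

/-- `B` is perfect copositive: strictly copositive and uniquely determined among
symmetric matrices by the equations `vᵀQv = copoMin B` for `v ∈ MinCOP B`. -/
def IsPerfectCopositive {n : ℕ} (B : Matrix (Fin n) (Fin n) ℝ) : Prop :=
  B.IsSymm ∧ StrictlyCopositive B ∧
    ∀ Q : Matrix (Fin n) (Fin n) ℝ, Q.IsSymm →
      (∀ v ∈ MinCOP B, qf Q (intCast v) = copoMin B) → Q = B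

lemma qf_continuous {n : ℕ} (B : Matrix (Fin n) (Fin n) ℝ) : Continuous (qf B) := by
  have : qf B = fun (x : Fin n → ℝ) => ∑ i, x i * ∑ j, B i j * x j := by
    funext x; simp [qf, dotProduct, Matrix.mulVec]
  rw [this]
  exact continuous_finset_sum _ fun i _ =>
    (continuous_apply i).mul (continuous_finset_sum _ fun j _ =>
      (continuous_const.mul (continuous_apply j)))

lemma qf_smul {n : ℕ} (B : Matrix (Fin n) (Fin n) ℝ) (t : ℝ) (x : Fin n → ℝ) :
    qf B (t • x) = t ^ 2 * qf B x := by
  simp [qf, Matrix.mulVec_smul, smul_dotProduct, dotProduct_smul, smul_eq_mul]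
  ring

theorem minCOP_finite {n : ℕ} (hn : 0 < n) (B : Matrix (Fin n) (Fin n) ℝ)
    (hB : B.IsSymm) (hsc : StrictlyCopositive B) : (MinCOP B).Finite := by
  classical
  -- the simplex
  set S : Set (Fin n → ℝ) := {x | (∀ i, 0 ≤ x i) ∧ ∑ i, x i = 1} with hS
  have hSne : S.Nonempty := by
    refine ⟨fun i => if i = ⟨0, hn⟩ then 1 else 0, fun i => by positivity, ?_⟩
    simp
  have hScl : IsClosed S := by
    have h1 : IsClosed {x : Fin n → ℝ | ∀ i, 0 ≤ x i} := by
      have : {x : Fin n → ℝ | ∀ i, 0 ≤ x i} = ⋂ i, {x | 0 ≤ x i} := by ext; simp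
      rw [this]
      exact isClosed_iInter fun i => isClosed_le continuous_const (continuous_apply i)
    have h2 : IsClosed {x : Fin n → ℝ | ∑ i, x i = 1} :=
      isClosed_eq (continuous_finset_sum _ fun i _ => continuous_apply i) continuous_const
    exact h1.inter h2
  have hScomp : IsCompact S := by
    have hsub : S ⊆ Set.pi Set.univ (fun _ : Fin n => Set.Icc (0:ℝ) 1) := by
      rintro x ⟨hx0, hx1⟩ i _
      refine ⟨hx0 i, ?_⟩
      calc x i ≤ ∑ j, x j := Finset.single_le_sum (fun j _ => hx0 j) (Finset.mem_univ i)
        _ = 1 := hx1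
    exact (isCompact_univ_pi fun _ => isCompact_Icc).of_isClosed_subset hScl hsub
  obtain ⟨x0, hx0S, hx0min⟩ := hScomp.exists_isMinOn hSne (qf_continuous B).continuousOn
  set c : ℝ := qf B x0 with hc
  have hcpos : 0 < c := by
    apply hsc x0 hx0S.1
    intro h
    have := hx0S.2
    simp [h] at this
  -- bound: copoMin B ≤ R where R = qf B (all ones)
  set v1 : Fin n → ℤ := fun _ => 1 with hv1
  have hv1ne : v1 ≠ 0 := by
    intro h
    have := congrFun h ⟨0, hn⟩
    simp [hv1] at this
  set R : ℝ := qf B (intCast v1) with hR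
  have hbdd : BddBelow {r : ℝ | ∃ v : Fin n → ℤ, (∀ i, 0 ≤ v i) ∧ v ≠ 0 ∧ r = qf B (intCast v)} := by
    refine ⟨0, ?_⟩
    rintro r ⟨v, hv0, hvne, rfl⟩
    refine le_of_lt (hsc _ (fun i => show (0:ℝ) ≤ (v i : ℝ) from by exact_mod_cast hv0 i) ?_)
    intro h
    apply hvne
    funext i
    have := congrFun h i
    simpa [intCast] using this
  have hcopo_le : copoMin B ≤ R := by
    apply csInf_le hbdd
    exact ⟨v1, fun i => by simp [hv1], hv1ne, rfl⟩
  -- any v in MinCOP has sum bounded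
  have key : ∀ v ∈ MinCOP B, ∀ i, v i ≤ ⌈R / c⌉ := by
    rintro v ⟨hv0, hvne, hveq⟩ i
    set t : ℝ := ∑ j, (v j : ℝ) with ht
    have htge1 : (1:ℝ) ≤ t := by
      obtain ⟨j, hj⟩ : ∃ j, v j ≠ 0 := by
        by_contra h
        push_neg at h
        exact hvne (funext h)
      have h1 : (1:ℝ) ≤ (v j : ℝ) := by exact_mod_cast lt_of_le_of_ne (hv0 j) (Ne.symm hj)
      calc (1:ℝ) ≤ (v j : ℝ) := h1
        _ ≤ t := Finset.single_le_sum (f := fun k => ((v k : ℝ)))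
              (fun k _ => show (0:ℝ) ≤ (v k : ℝ) from by exact_mod_cast hv0 k) (Finset.mem_univ j)
    have htpos : 0 < t := lt_of_lt_of_le one_pos htge1
    have hxS : t⁻¹ • intCast v ∈ S := by
      constructor
      · intro k
        have h1 : (0:ℝ) ≤ (v k : ℝ) := by exact_mod_cast hv0 k
        have h2 : (0:ℝ) ≤ t⁻¹ := by positivity
        simpa [intCast] using mul_nonneg h2 h1
      · simp only [Pi.smul_apply, smul_eq_mul, ← Finset.mul_sum]
        rw [show ∑ k, (intCast v) k = t from rfl]
        field_simp
    have hqge : c ≤ qf B (t⁻¹ • intCast v) := hx0min hxS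
    have hhom : qf B (intCast v) = t ^ 2 * qf B (t⁻¹ • intCast v) := by
      rw [← qf_smul, smul_smul, mul_inv_cancel₀ (ne_of_gt htpos), one_smul]
    have hqv : t ^ 2 * c ≤ qf B (intCast v) := by
      rw [hhom]
      exact mul_le_mul_of_nonneg_left hqge (by positivity)
    have hqvle : qf B (intCast v) ≤ R := by rw [hveq]; exact hcopo_le
    have ht2 : t ^ 2 ≤ R / c := by
      rw [le_div_iff₀ hcpos]
      exact le_trans hqv hqvle
    have htle : t ≤ R / c := by
      calc t ≤ t ^ 2 := by nlinarith
        _ ≤ R / c := ht2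
    have hvi : (v i : ℝ) ≤ R / c := by
      calc (v i : ℝ) ≤ t := Finset.single_le_sum (f := fun k => ((v k : ℝ)))
              (fun k _ => show (0:ℝ) ≤ (v k : ℝ) from by exact_mod_cast hv0 k) (Finset.mem_univ i)
        _ ≤ R / c := htle
    calc v i ≤ ⌈(v i : ℝ)⌉ := by simp
      _ ≤ ⌈R / c⌉ := Int.ceil_le_ceil hvi
  -- finiteness
  have hsub : MinCOP B ⊆ Set.pi Set.univ (fun _ : Fin n => Set.Icc (0:ℤ) ⌈R / c⌉) := by
    intro v hv i _
    exact ⟨hv.1 i, key v hv i⟩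
  exact Set.Finite.subset (Set.Finite.pi fun _ => Set.finite_Icc _ _) hsub
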